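/- If a metric space X has barycentres and a group G acts on X by isometries, then for every g ∈ G the infimal displacement |g| = inf{d(x,gx) : x ∈ X} equals the stable translation length τ_X(g). -/

import Mathlib

open Filter Topology

/-- A metric space has barycentres if for each `n` there is an idempotent, symmetric,
`Isom(X)`-invariant, `(1/n)`-Lipschitz map `Xⁿ → X`. -/
structure Barycenters (X : Type*) [MetricSpace X] where
  b : ∀ n : ℕ, (Fin n → X) → X
  idem : ∀ (n : ℕ), 0 < n → ∀ x : X, b n (fun _ => x) = x
  symm : ∀ (n : ℕ) (σ : Equiv.Perm (Fin n)) (x : Fin n → X), b n (x ∘ σ) = b n x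
  isom_inv : ∀ (n : ℕ) (e : X ≃ᵢ X) (x : Fin n → X), e (b n x) = b n (fun i => e (x i))
  lip : ∀ (n : ℕ), 0 < n → ∀ x y : Fin n → X,
    dist (b n x) (b n y) ≤ (1 / n) * ∑ i, dist (x i) (y i)

/-- The isometry of `X` given by the action of `g`. -/
def isomOfSmul {G X : Type*} [Group G] [MetricSpace X] [MulAction G X]
    (hiso : ∀ (g : G) (x y : X), dist (g • x) (g • y) = dist x y) (g : G) : X ≃ᵢ X where
  toFun := (g • ·)
  invFun := (g⁻¹ • ·)
  left_inv := fun x => inv_smul_smul g x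
  right_inv := fun x => smul_inv_smul g x
  isometry_toFun := Isometry.of_dist_eq (hiso g)

/-- In a space with barycentres, the infimal displacement of every group element acting
by isometries equals its stable translation length. -/
theorem infDisplacement_eq_translation_length
    {G X : Type*} [Group G] [MetricSpace X] [Nonempty X] [MulAction G X]
    (B : Barycenters X)
    (hiso : ∀ (g : G) (x y : X), dist (g • x) (g • y) = dist x y)
    (g : G) (τ : ℝ)
    (hτ : ∀ x : X, Tendsto (fun n : ℕ => dist x (g ^ n • x) / n) atTop (𝓝 τ)) :
    (⨅ x : X, dist x (g • x)) = τ := by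
  obtain ⟨x0⟩ := ‹Nonempty X›
  have hbdd : BddBelow (Set.range fun x : X => dist x (g • x)) := by
    refine ⟨0, ?_⟩
    rintro _ ⟨x, rfl⟩
    positivity
  apply le_antisymm
  · -- inf ≤ τ
    refine ge_of_tendsto (hτ x0) ?_
    rw [eventually_atTop]
    refine ⟨1, fun n hn => ?_⟩
    obtain ⟨m, rfl⟩ : ∃ m, n = m + 1 := ⟨n - 1, by omega⟩
    set n := m + 1 with hn'
    have hnpos : (0 : ℕ) < n := Nat.succ_pos m
    set f : Fin n → X := fun i => g ^ (i : ℕ) • x0 with hf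
    set u : Fin n → X := fun i => g ^ ((i : ℕ) + 1) • x0 with hu
    set σ : Equiv.Perm (Fin n) := (finRotate n).symm with hσ
    set xb : X := B.b n f with hxb
    have hgxb : g • xb = B.b n u := by
      have h1 : (isomOfSmul hiso g) (B.b n f) = B.b n (fun i => (isomOfSmul hiso g) (f i)) :=
        B.isom_inv n (isomOfSmul hiso g) f
      have h2 : (fun i => (isomOfSmul hiso g) (f i)) = u := by
        funext i
        show g • (g ^ (i : ℕ) • x0) = g ^ ((i : ℕ) + 1) • x0
        rw [smul_smul, ← pow_succ']
      rw [h2] at h1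
      exact h1
    have hperm : B.b n (u ∘ σ) = B.b n u := B.symm n σ u
    have hsum : ∑ i, dist (f i) ((u ∘ σ) i) = dist x0 (g ^ n • x0) := by
      rw [← Equiv.sum_comp σ.symm (fun i => dist (f i) ((u ∘ σ) i))]
      have hterm : ∀ j : Fin n, dist (f (σ.symm j)) ((u ∘ σ) (σ.symm j))
          = if j = Fin.last m then dist x0 (g ^ n • x0) else 0 := by
        intro j
        have h1 : σ (σ.symm j) = j := σ.apply_symm_apply j
        have h2 : σ.symm j = j + 1 := by
          rw [hσ, Equiv.symm_symm, finRotate_succ_apply]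
        rw [Function.comp_apply, h1, h2]
        show dist (g ^ ((j + 1 : Fin n) : ℕ) • x0) (g ^ ((j : ℕ) + 1) • x0) = _
        rw [Fin.val_add_one]
        split_ifs with h
        · subst h
          simp [Fin.val_last]
          rfl
        · simp
      rw [Finset.sum_congr rfl (fun j _ => hterm j)]
      simp
    have hlip : dist xb (g • xb) ≤ (1 / (n : ℝ)) * dist x0 (g ^ n • x0) := by
      rw [hgxb, ← hperm, ← hsum]
      exact B.lip n hnpos f (u ∘ σ)
    have hinf : (⨅ x : X, dist x (g • x)) ≤ dist xb (g • xb) := ciInf_le hbdd xb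
    calc (⨅ x : X, dist x (g • x)) ≤ (1 / (n : ℝ)) * dist x0 (g ^ n • x0) :=
          hinf.trans hlip
      _ = dist x0 (g ^ n • x0) / n := by ring
  · -- τ ≤ inf
    refine le_ciInf fun x => ?_
    have hlin : ∀ n : ℕ, dist x (g ^ n • x) ≤ n * dist x (g • x) := by
      intro n
      induction n with
      | zero => simp
      | succ k ih =>
        have : dist x (g ^ (k + 1) • x) ≤ dist x (g • x) + dist (g • x) (g ^ (k + 1) • x) :=
          dist_triangle _ _ _
        have h2 : dist (g • x) (g ^ (k + 1) • x) = dist x (g ^ k • x) := by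
          have : g ^ (k + 1) • x = g • (g ^ k • x) := by rw [pow_succ', mul_smul]
          rw [this, hiso]
        push_cast
        nlinarith [dist_nonneg (x := x) (y := g • x)]
    refine le_of_tendsto (hτ x) ?_
    rw [eventually_atTop]
    refine ⟨1, fun n hn => ?_⟩
    have hnpos : (0 : ℝ) < n := by exact_mod_cast hn
    rw [div_le_iff₀ hnpos]
    calc dist x (g ^ n • x) ≤ n * dist x (g • x) := hlin n
      _ = dist x (g • x) * n := by ring
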